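/- arXiv:2204.08181 — 6 statements merged into one kernel-verified Lean document; each statement's English description precedes it below -/
import Mathlib

section
/- For all y ∈ ℝ the following weighted bounds hold: |\overline{W}(y)| ≤ η(y)^{1/6}; −η(y)^{−1/3} ≤ \overline{W}'(y) ≤ −(1/6)η(y)^{−1/3}; and |\overline{W}''(y)| ≤ 2 η(y)^{−5/6}. -/
/-- The steady profile `W̄(y) = (−y/2+(1/27+y²/4)^{1/2})^{1/3} − (y/2+(1/27+y²/4)^{1/2})^{1/3}`. -/
noncomputable def barW (y : ℝ) : ℝ :=
  (-y / 2 + Real.sqrt (1 / 27 + y ^ 2 / 4)) ^ ((1 : ℝ) / 3) -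
    (y / 2 + Real.sqrt (1 / 27 + y ^ 2 / 4)) ^ ((1 : ℝ) / 3)

lemma sqrt_gt' (y : ℝ) : |y| / 2 < Real.sqrt (1 / 27 + y ^ 2 / 4) := by
  have hp : (0:ℝ) < 1 / 27 + y ^ 2 / 4 := by positivity
  nlinarith [Real.sq_sqrt hp.le, Real.sqrt_nonneg (1 / 27 + y ^ 2 / 4), abs_nonneg y,
    sq_abs y, sq_nonneg (|y|/2 - Real.sqrt (1 / 27 + y ^ 2 / 4))]

lemma a_pos (y : ℝ) : 0 < -y / 2 + Real.sqrt (1 / 27 + y ^ 2 / 4) := by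
  have := sqrt_gt' y
  have : y/2 ≤ |y|/2 := by gcongr; exact le_abs_self y
  linarith [sqrt_gt' y]

lemma b_pos (y : ℝ) : 0 < y / 2 + Real.sqrt (1 / 27 + y ^ 2 / 4) := by
  have : -y/2 ≤ |y|/2 := by
    have := neg_abs_le y; linarith
  linarith [sqrt_gt' y]

lemma cube_rpow_third {x : ℝ} (hx : 0 ≤ x) : (x ^ ((1:ℝ)/3)) ^ (3:ℕ) = x := by
  rw [← Real.rpow_natCast (x ^ ((1:ℝ)/3)) 3, ← Real.rpow_mul hx]
  norm_num

lemma barW_cubic (y : ℝ) : (barW y)^3 + barW y + y = 0 := by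
  set s := Real.sqrt (1 / 27 + y ^ 2 / 4) with hs
  have ha := a_pos y
  have hb := b_pos y
  set A := (-y / 2 + s) ^ ((1:ℝ)/3) with hA
  set B := (y / 2 + s) ^ ((1:ℝ)/3) with hB
  have hA3 : A ^ (3:ℕ) = -y/2 + s := cube_rpow_third ha.le
  have hB3 : B ^ (3:ℕ) = y/2 + s := cube_rpow_third hb.le
  have hAB : A * B = 1/3 := by
    rw [hA, hB, ← Real.mul_rpow ha.le hb.le]
    have hprod : (-y / 2 + s) * (y / 2 + s) = 1/27 := by
      have : s ^ 2 = 1 / 27 + y ^ 2 / 4 := Real.sq_sqrt (by positivity)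
      nlinarith
    rw [hprod, show (1:ℝ)/27 = (1/3)^(3:ℕ) by norm_num, ← Real.rpow_natCast ((1:ℝ)/3) 3,
      ← Real.rpow_mul (by norm_num)]
    norm_num
  have : barW y = A - B := rfl
  rw [this]
  have expand : (A - B)^3 = A^(3:ℕ) - B^(3:ℕ) - 3*(A*B)*(A-B) := by ring
  rw [expand, hA3, hB3, hAB]
  ring

lemma barW_hasDerivAt_aux (y : ℝ) : ∃ d : ℝ, HasDerivAt barW d y := by
  have hp : (0:ℝ) < 1 / 27 + y ^ 2 / 4 := by positivity
  have hu : HasDerivAt (fun y : ℝ => 1 / 27 + y ^ 2 / 4) (y / 2) y := by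
    have : HasDerivAt (fun y : ℝ => y ^ 2) (2 * y) y := by
      simpa using (hasDerivAt_pow 2 y)
    have h2 := (this.div_const 4).const_add (1/27)
    exact h2.congr_deriv (by ring)
  have hsq : HasDerivAt (fun y : ℝ => Real.sqrt (1 / 27 + y ^ 2 / 4))
      (y / 2 / (2 * Real.sqrt (1 / 27 + y ^ 2 / 4))) y := by
    have := (Real.hasDerivAt_sqrt hp.ne').comp y hu
    refine this.congr_deriv ?_
    ring
  have hf1 : HasDerivAt (fun y : ℝ => -y / 2 + Real.sqrt (1 / 27 + y ^ 2 / 4))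
      (-1/2 + y / 2 / (2 * Real.sqrt (1 / 27 + y ^ 2 / 4))) y := by
    have h1 : HasDerivAt (fun y : ℝ => -y / 2) (-1/2) y := by
      simpa using ((hasDerivAt_id y).neg.div_const 2)
    exact h1.add hsq
  have hf2 : HasDerivAt (fun y : ℝ => y / 2 + Real.sqrt (1 / 27 + y ^ 2 / 4))
      (1/2 + y / 2 / (2 * Real.sqrt (1 / 27 + y ^ 2 / 4))) y := by
    have h1 : HasDerivAt (fun y : ℝ => y / 2) (1/2) y := by
      simpa using ((hasDerivAt_id y).div_const 2)
    exact h1.add hsq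
  have hr1 := (Real.hasDerivAt_rpow_const (x := -y / 2 + Real.sqrt (1 / 27 + y ^ 2 / 4))
      (p := (1:ℝ)/3) (Or.inl (a_pos y).ne')).comp y hf1
  have hr2 := (Real.hasDerivAt_rpow_const (x := y / 2 + Real.sqrt (1 / 27 + y ^ 2 / 4))
      (p := (1:ℝ)/3) (Or.inl (b_pos y).ne')).comp y hf2
  exact ⟨_, hr1.sub hr2⟩

lemma barW_hasDerivAt (y : ℝ) : HasDerivAt barW (-(3 * (barW y)^2 + 1)⁻¹) y := by
  obtain ⟨d, hd⟩ := barW_hasDerivAt_aux y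
  have hF : HasDerivAt (fun y : ℝ => (barW y)^3 + barW y + y)
      (3 * (barW y)^2 * d + d + 1) y := by
    have h1 : HasDerivAt (fun y : ℝ => (barW y)^3) (3 * (barW y)^2 * d) y := by
      have := (hasDerivAt_pow 3 (barW y)).comp y hd
      refine this.congr_deriv ?_; push_cast; ring
    have := (h1.add hd).add (hasDerivAt_id y)
    exact this
  have hF0 : (fun y : ℝ => (barW y)^3 + barW y + y) = fun _ => (0:ℝ) :=
    funext fun y => barW_cubic y
  rw [hF0] at hF
  have h0 : HasDerivAt (fun _ : ℝ => (0:ℝ)) 0 y := hasDerivAt_const y 0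
  have heq : 3 * (barW y)^2 * d + d + 1 = 0 := hF.unique h0
  have hpos : (0:ℝ) < 3 * (barW y)^2 + 1 := by positivity
  have hdval : d = -(3 * (barW y)^2 + 1)⁻¹ := by
    field_simp
    linarith
  rwa [hdval] at hd

lemma deriv_barW (y : ℝ) : deriv barW y = -(3 * (barW y)^2 + 1)⁻¹ :=
  (barW_hasDerivAt y).deriv

lemma barW_second (y : ℝ) :
    iteratedDeriv 2 barW y = -6 * barW y / (3 * (barW y)^2 + 1)^3 := by
  rw [iteratedDeriv_succ, iteratedDeriv_one]
  have hderiv : deriv barW = fun y => -(3 * (barW y)^2 + 1)⁻¹ := funext deriv_barW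
  rw [hderiv]
  have hw := barW_hasDerivAt y
  have hpos : (0:ℝ) < 3 * (barW y)^2 + 1 := by positivity
  have hg : HasDerivAt (fun y : ℝ => 3 * (barW y)^2 + 1)
      (3 * (2 * barW y * (-(3 * (barW y)^2 + 1)⁻¹))) y := by
    have := ((hasDerivAt_pow 2 (barW y)).comp y hw).const_mul 3
    refine (this.add_const 1).congr_deriv ?_
    push_cast; ring
  have := (hg.inv hpos.ne').neg
  rw [HasDerivAt.deriv (f := fun y => -(3 * barW y ^ 2 + 1)⁻¹) this]
  field_simp
  ring

lemma pow_rpow_sixth {x : ℝ} (hx : 0 ≤ x) : ((x ^ (6:ℕ) : ℝ)) ^ ((1:ℝ)/6) = x := by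
  rw [← Real.rpow_natCast x 6, ← Real.rpow_mul hx]; norm_num

lemma pow_rpow_third {x : ℝ} (hx : 0 ≤ x) : ((x ^ (3:ℕ) : ℝ)) ^ ((1:ℝ)/3) = x := by
  rw [← Real.rpow_natCast x 3, ← Real.rpow_mul hx]; norm_num

/-- Weighted bounds for `W̄` and its first two derivatives, with weight `η(y) = 1 + y²`:
`|W̄| ≤ η^{1/6}`, `−η^{−1/3} ≤ W̄' ≤ −(1/6)η^{−1/3}`, `|W̄''| ≤ 2η^{−5/6}`. -/
theorem stmt_6 (y : ℝ) :
    |barW y| ≤ (1 + y ^ 2) ^ ((1 : ℝ) / 6) ∧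
    -(1 + y ^ 2) ^ (-(1 : ℝ) / 3) ≤ deriv barW y ∧
    deriv barW y ≤ -(1 / 6) * (1 + y ^ 2) ^ (-(1 : ℝ) / 3) ∧
    |iteratedDeriv 2 barW y| ≤ 2 * (1 + y ^ 2) ^ (-(5 : ℝ) / 6) := by
  set w := barW y with hw
  have hcubic := barW_cubic y
  have hy : y = -(w^3 + w) := by linarith
  have heta : 1 + y^2 = 1 + (w^3 + w)^2 := by rw [hy]; ring
  have hetapos : (0:ℝ) < 1 + y^2 := by positivity
  set η := 1 + y^2 with hη
  set P := 3 * w^2 + 1 with hP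
  have hPpos : (0:ℝ) < P := by positivity
  -- bound 1
  have h1 : |w| ≤ η ^ ((1:ℝ)/6) := by
    have h6 : |w| ^ (6:ℕ) ≤ η := by
      rw [heta]
      have : |w| ^ (6:ℕ) = w^6 := by rw [← abs_pow, abs_of_nonneg (by positivity)]
      rw [this]; nlinarith [sq_nonneg w, sq_nonneg (w^2), sq_nonneg (w^3)]
    calc |w| = ((|w| ^ (6:ℕ) : ℝ)) ^ ((1:ℝ)/6) := (pow_rpow_sixth (abs_nonneg w)).symm
      _ ≤ η ^ ((1:ℝ)/6) := Real.rpow_le_rpow (by positivity) h6 (by norm_num)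
  -- key comparisons for P
  have hetaP : η ≤ P ^ (3:ℕ) := by
    rw [heta, hP]; nlinarith [sq_nonneg w, sq_nonneg (w^2), sq_nonneg (w^3), sq_nonneg (w*(w^2-1))]
  have hP6 : P ^ (3:ℕ) ≤ 216 * η := by
    rw [heta, hP]; nlinarith [sq_nonneg w, sq_nonneg (w^2), sq_nonneg (w^3)]
  have hcube1 : η ^ ((1:ℝ)/3) ≤ P := by
    calc η ^ ((1:ℝ)/3) ≤ (P ^ (3:ℕ)) ^ ((1:ℝ)/3) :=
          Real.rpow_le_rpow hetapos.le hetaP (by norm_num)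
      _ = P := pow_rpow_third hPpos.le
  have hcube2 : P ≤ 6 * η ^ ((1:ℝ)/3) := by
    calc P = (P ^ (3:ℕ)) ^ ((1:ℝ)/3) := (pow_rpow_third hPpos.le).symm
      _ ≤ (216 * η) ^ ((1:ℝ)/3) := Real.rpow_le_rpow (by positivity) hP6 (by norm_num)
      _ = 6 * η ^ ((1:ℝ)/3) := by
          rw [Real.mul_rpow (by norm_num) hetapos.le,
            show (216:ℝ) = 6 ^ (3:ℕ) by norm_num, pow_rpow_third (by norm_num : (0:ℝ) ≤ 6)]
  have hd : deriv barW y = -P⁻¹ := deriv_barW y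
  have hetarpow_pos : (0:ℝ) < η ^ ((1:ℝ)/3) := Real.rpow_pos_of_pos hetapos _
  have hneg13 : η ^ (-(1:ℝ)/3) = (η ^ ((1:ℝ)/3))⁻¹ := by
    rw [show -(1:ℝ)/3 = -((1:ℝ)/3) by norm_num, Real.rpow_neg hetapos.le]
  refine ⟨h1, ?_, ?_, ?_⟩
  · rw [hd, hneg13, neg_le_neg_iff]
    exact inv_anti₀ hetarpow_pos hcube1
  · rw [hd, hneg13]
    have : (6 * η ^ ((1:ℝ)/3))⁻¹ ≤ P⁻¹ := inv_anti₀ hPpos hcube2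
    rw [mul_inv] at this
    have h6 : -(1/6 * (η ^ ((1:ℝ)/3))⁻¹) = -((6:ℝ)⁻¹ * (η ^ ((1:ℝ)/3))⁻¹) := by norm_num
    rw [show (-(1/6) : ℝ) * (η ^ ((1:ℝ)/3))⁻¹ = -((6:ℝ)⁻¹ * (η ^ ((1:ℝ)/3))⁻¹) by norm_num]
    linarith
  · -- second derivative bound
    rw [barW_second y, ← hw, ← hP]
    have key : (P:ℝ) ^ (18:ℕ) - 729 * w^6 * (1 + (w^3+w)^2)^(5:ℕ) =
        1 + 54*w^2 + 1377*w^4 + 21303*w^6 + 244215*w^8 + 2067444*w^10 + 13493061*w^12 +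
        69507963*w^14 + 286927839*w^16 + 956725020*w^18 + 2583519867*w^20 + 5637139758*w^22 +
        9865306224*w^24 + 13659873696*w^26 + 14635702890*w^28 + 11708616987*w^30 +
        6586115508*w^32 + 2324515644*w^34 + 387419760*w^36 := by
      rw [hP]; ring
    have keynn : 729 * w^6 * (1 + (w^3+w)^2)^(5:ℕ) ≤ P ^ (18:ℕ) := by
      have hnn : (0:ℝ) ≤ 1 + 54*w^2 + 1377*w^4 + 21303*w^6 + 244215*w^8 + 2067444*w^10 +
          13493061*w^12 + 69507963*w^14 + 286927839*w^16 + 956725020*w^18 + 2583519867*w^20 +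
          5637139758*w^22 + 9865306224*w^24 + 13659873696*w^26 + 14635702890*w^28 +
          11708616987*w^30 + 6586115508*w^32 + 2324515644*w^34 + 387419760*w^36 := by positivity
      linarith [key]
    have hmain : 3 * |w| * η ^ ((5:ℝ)/6) ≤ P^3 := by
      have h6 : (3*|w|)^(6:ℕ) * η^(5:ℕ) ≤ ((P^3 : ℝ))^(6:ℕ) := by
        have habs6 : (3*|w|)^(6:ℕ) = 729 * w^6 := by
          rw [mul_pow, ← abs_pow, abs_of_nonneg (by positivity : (0:ℝ) ≤ w^6)]; norm_num
        rw [habs6, heta, ← pow_mul]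
        calc 729 * w^6 * (1 + (w^3+w)^2)^(5:ℕ) ≤ P ^ (18:ℕ) := keynn
          _ = P ^ (3*6) := by norm_num
      calc 3*|w| * η ^ ((5:ℝ)/6)
          = ((3*|w|)^(6:ℕ) * η^(5:ℕ)) ^ ((1:ℝ)/6) := by
            rw [Real.mul_rpow (by positivity) (by positivity),
              pow_rpow_sixth (by positivity),
              ← Real.rpow_natCast η 5, ← Real.rpow_mul hetapos.le]
            norm_num
        _ ≤ (((P^3 : ℝ))^(6:ℕ)) ^ ((1:ℝ)/6) :=
            Real.rpow_le_rpow (by positivity) h6 (by norm_num)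
        _ = P^3 := pow_rpow_sixth (by positivity)
    have h56 : η ^ (-(5:ℝ)/6) = (η ^ ((5:ℝ)/6))⁻¹ := by
      rw [show -(5:ℝ)/6 = -((5:ℝ)/6) by norm_num, Real.rpow_neg hetapos.le]
    have hP3pos : (0:ℝ) < P^3 := by positivity
    have h56pos : (0:ℝ) < η ^ ((5:ℝ)/6) := Real.rpow_pos_of_pos hetapos _
    have habs : |(-6 * w) / P^3| = 6 * |w| / P^3 := by
      rw [abs_div, abs_of_pos hP3pos, abs_mul]
      norm_num
    rw [habs, h56, show (2:ℝ) * (η ^ ((5:ℝ)/6))⁻¹ = 2 / η ^ ((5:ℝ)/6) by ring,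
      div_le_div_iff₀ hP3pos h56pos]
    nlinarith [hmain, abs_nonneg w]
end

section
/- Let M ≥ 2, ε ∈ (0,1) with 2M^{12}ε² ≤ 1, set ℓ = M^{−4}, and let ζ₀ ≥ log(1/ε). Suppose y : [ζ₀,∞) → ℝ is differentiable and satisfies y'(ζ) = (3/2)y(ζ) + G(ζ), where G : [ζ₀,∞) → ℝ satisfies |G(ζ)| ≤ (1/4)|y(ζ)| + M² e^{−ζ} for all ζ ≥ ζ₀. Then: (i) if |y(ζ₀)| ≥ ℓ, then |y(ζ)| ≥ |y(ζ₀)| e^{(ζ−ζ₀)/2} for all ζ ≥ ζ₀; (ii) consequently, if |y(s)| ≤ ℓ for some s ≥ ζ₀, then |y(ζ)| ≤ ℓ for all ζ₀ ≤ ζ ≤ s. -/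
open Set Real

private lemma sq_le_imp (a b : ℝ) (ha : 0 ≤ a) (hb : 0 ≤ b) (h : a ^ 2 ≤ b ^ 2) : a ≤ b := by
  nlinarith

/-- ODE form of Proposition 5.1: along a trajectory solving `y' = (3/2)y + G` with
`|G(ζ)| ≤ (1/4)|y(ζ)| + M²e^{−ζ}` on `[ζ₀,∞)` where `ζ₀ ≥ log(1/ε)`, with `ℓ = M⁻⁴`:
(i) if `|y(ζ₀)| ≥ ℓ` then `|y(ζ)| ≥ |y(ζ₀)|e^{(ζ−ζ₀)/2}` for all `ζ ≥ ζ₀`;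
(ii) consequently if `|y(s)| ≤ ℓ` for some `s ≥ ζ₀`, then `|y(ζ)| ≤ ℓ` for `ζ₀ ≤ ζ ≤ s`. -/
theorem stmt_7 (M ε ℓ ζ₀ : ℝ) (hM : 2 ≤ M) (hε0 : 0 < ε) (hε1 : ε < 1)
    (hMε : 2 * M ^ 12 * ε ^ 2 ≤ 1) (hℓ : ℓ = 1 / M ^ 4)
    (hζ₀ : Real.log (1 / ε) ≤ ζ₀)
    (y G : ℝ → ℝ)
    (hy : ∀ ζ ∈ Set.Ici ζ₀,
      HasDerivWithinAt y ((3 / 2) * y ζ + G ζ) (Set.Ici ζ₀) ζ)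
    (hG : ∀ ζ ∈ Set.Ici ζ₀, |G ζ| ≤ (1 / 4) * |y ζ| + M ^ 2 * Real.exp (-ζ)) :
    (ℓ ≤ |y ζ₀| → ∀ ζ ∈ Set.Ici ζ₀, |y ζ₀| * Real.exp ((ζ - ζ₀) / 2) ≤ |y ζ|) ∧
    (∀ s ∈ Set.Ici ζ₀, |y s| ≤ ℓ → ∀ ζ, ζ₀ ≤ ζ → ζ ≤ s → |y ζ| ≤ ℓ) := by
  have hM0 : (0:ℝ) < M := by linarith
  have hM4 : (0:ℝ) < M ^ 4 := by positivity
  have hℓ0 : 0 < ℓ := by rw [hℓ]; positivity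
  -- key smallness: 2 M² ε < (3/2) ℓ
  have hsmall : 2 * M ^ 2 * ε < (3/2) * ℓ := by
    have h6 : 2 * M ^ 6 * ε < 3/2 := by
      nlinarith [sq_nonneg (2 * M ^ 6 * ε - 3/2)]
    rw [hℓ, show (3:ℝ)/2 * (1 / M ^ 4) = (3/2) / M ^ 4 by ring, lt_div_iff₀ hM4]
    nlinarith [h6]
  -- e^{-x} ≤ ε for x ≥ ζ₀
  have hexp : ∀ x : ℝ, ζ₀ ≤ x → Real.exp (-x) ≤ ε := by
    intro x hx
    have h1 : -x ≤ Real.log ε := by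
      rw [one_div, Real.log_inv] at hζ₀; linarith
    calc Real.exp (-x) ≤ Real.exp (Real.log ε) := Real.exp_le_exp.mpr h1
      _ = ε := Real.exp_log hε0
  -- continuity of y on Ici ζ₀
  have hyc : ContinuousOn y (Ici ζ₀) := fun x hx => (hy x hx).continuousWithinAt
  -- Key lemma: growth from any starting point ζ₁ ≥ ζ₀ with |y ζ₁| ≥ ℓ
  have key : ∀ ζ₁, ζ₀ ≤ ζ₁ → ℓ ≤ |y ζ₁| → ∀ ζ, ζ₁ ≤ ζ →
      |y ζ₁| * Real.exp ((ζ - ζ₁) / 2) ≤ |y ζ| := by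
    intro ζ₁ hζ₁ hyl ζ hζ
    set c := |y ζ₁| with hc
    set F : ℝ → ℝ := fun x => c ^ 2 * Real.exp (x - ζ₁) - (y x) ^ 2 with hF
    set F' : ℝ → ℝ := fun x => c ^ 2 * Real.exp (x - ζ₁) - 2 * y x * ((3/2) * y x + G x)
      with hF'
    have hsub : Icc ζ₁ ζ ⊆ Ici ζ₀ := fun x hx => le_trans hζ₁ hx.1
    have hFc : ContinuousOn F (Icc ζ₁ ζ) := by
      apply ContinuousOn.sub
      · exact (continuous_const.mul (Real.continuous_exp.comp
          (continuous_id.sub continuous_const))).continuousOn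
      · exact ((hyc.mono hsub).pow 2)
    have hFd : ∀ x ∈ Ico ζ₁ ζ, HasDerivWithinAt F (F' x) (Ici x) x := by
      intro x hx
      have hx0 : ζ₀ ≤ x := le_trans hζ₁ hx.1
      have hdy : HasDerivWithinAt y ((3/2) * y x + G x) (Ici x) x :=
        (hy x hx0).mono (Ici_subset_Ici.mpr hx0)
      have hde : HasDerivAt (fun t => Real.exp (t - ζ₁)) (Real.exp (x - ζ₁)) x := by
        simpa [Function.comp_def] using (Real.hasDerivAt_exp (x - ζ₁)).comp x ((hasDerivAt_id x).sub_const ζ₁)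
      have h2 : HasDerivWithinAt (fun t => (y t) ^ 2)
          (2 * y x * ((3/2) * y x + G x)) (Ici x) x := by
        have := hdy.pow 2
        simpa [mul_comm, mul_assoc, Pi.pow_def] using this
      exact ((hde.hasDerivWithinAt).const_mul (c ^ 2)).sub h2
    have hbound : ∀ x ∈ Ico ζ₁ ζ, F x = (fun _ => (0:ℝ)) x → F' x < (fun _ => (0:ℝ)) x := by
      intro x hx hFx
      have hx0 : ζ₀ ≤ x := le_trans hζ₁ hx.1
      simp only [hF] at hFx
      have hyx2 : (y x) ^ 2 = c ^ 2 * Real.exp (x - ζ₁) := by linarith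
      have h1e : (1:ℝ) ≤ Real.exp (x - ζ₁) := Real.one_le_exp (by linarith [hx.1])
      have hl2 : ℓ ^ 2 ≤ (y x) ^ 2 := by
        rw [hyx2]; nlinarith [sq_nonneg c]
      have hyabs : ℓ ≤ |y x| := sq_le_imp ℓ |y x| hℓ0.le (abs_nonneg _) (by
        rwa [sq_abs])
      have hGx := hG x hx0
      have hex := hexp x hx0
      have hyG : y x * G x ≥ -(|y x| * |G x|) := by
        rw [← abs_mul]; exact neg_abs_le _
      have hsq : |y x| ^ 2 = (y x) ^ 2 := sq_abs _
      simp only [hF']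
      rw [← hyx2]
      -- F' x = y² - 3y² - 2yG = -2y² - 2yG
      have hexpos : 0 < Real.exp (-x) := Real.exp_pos _
      nlinarith [mul_le_mul_of_nonneg_left hGx (abs_nonneg (y x)),
        mul_le_mul_of_nonneg_left hex (by positivity : (0:ℝ) ≤ 2 * M ^ 2),
        mul_lt_mul_of_pos_right (lt_of_lt_of_le hsmall (by nlinarith : (3/2) * ℓ ≤ (3/2) * |y x|))
          (lt_of_lt_of_le hℓ0 hyabs)]
    have hfence := image_le_of_deriv_right_lt_deriv_boundary' hFc hFd
      (by simp only [hF]; rw [hc, sq_abs, sub_self, Real.exp_zero, mul_one, sub_self] :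
        F ζ₁ ≤ (fun _ => (0:ℝ)) ζ₁)
      continuousOn_const (fun x _ => hasDerivWithinAt_const x _ 0) hbound
      (right_mem_Icc.mpr hζ)
    simp only [hF] at hfence
    have h2 : (c * Real.exp ((ζ - ζ₁) / 2)) ^ 2 ≤ |y ζ| ^ 2 := by
      have he : Real.exp ((ζ - ζ₁) / 2) * Real.exp ((ζ - ζ₁) / 2) = Real.exp (ζ - ζ₁) := by
        rw [← Real.exp_add]; ring_nf
      have he2 : Real.exp ((ζ - ζ₁) / 2) ^ 2 = Real.exp (ζ - ζ₁) := by
        rw [pow_two]; exact he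
      rw [sq_abs, mul_pow, he2]
      linarith
    exact sq_le_imp _ _ (by positivity) (abs_nonneg _) h2
  constructor
  · intro h ζ hζ
    exact key ζ₀ le_rfl h ζ hζ
  · intro s hs hys ζ hζ₀ζ hζs
    by_contra hcon
    push_neg at hcon
    have hk := key ζ hζ₀ζ hcon.le s hζs
    have h1e : (1:ℝ) ≤ Real.exp ((s - ζ) / 2) := Real.one_le_exp (by linarith)
    nlinarith [abs_nonneg (y ζ)]
end

section
/- Let a > 0, ζ₀ ∈ ℝ, and let h : [ζ₀,∞) → ℝ be continuous with |h(ζ) − a| ≤ a/2 for all ζ ≥ ζ₀. Let y : [ζ₀,∞) → ℝ solve y'(ζ) = (3/2)y(ζ) + e^{ζ/2}h(ζ) with y(ζ₀) = y₀. Then: (Case 1) if y₀ < −4a e^{ζ₀/2}, then y(ζ) ≤ −a e^{(3/2)ζ − ζ₀} < 0 for all ζ ≥ ζ₀; (Case 2) if −(a/4)e^{ζ₀/2} ≤ y₀ ≤ 0, then there exists ζ* ≥ ζ₀ with y(ζ*) = 0 such that −(3/2)a(e^{−ζ} − e^{−ζ*})e^{(3/2)ζ} ≤ y(ζ) ≤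 −(a/2)(e^{−ζ} − e^{−ζ*})e^{(3/2)ζ} ≤ 0 for ζ₀ ≤ ζ ≤ ζ*, and y(ζ) ≥ (a/2)(e^{−ζ*} − e^{−ζ})e^{(3/2)ζ} ≥ 0 for ζ ≥ ζ*; (Case 3) if y₀ ≥ 0, then y(ζ) ≥ (a/2)(e^{−ζ₀} − e^{−ζ})e^{(3/2)ζ} ≥ 0 for all ζ ≥ ζ₀. -/
lemma stmt8_expswap_ge (v c ζ : ℝ) (hc : c ≤ v * Real.exp (-(3 / 2) * ζ)) :
    c * Real.exp ((3 / 2) * ζ) ≤ v := by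
  have h1 := mul_le_mul_of_nonneg_right hc (Real.exp_pos ((3 / 2) * ζ)).le
  rwa [mul_assoc, ← Real.exp_add, show -(3 / 2) * ζ + (3 / 2) * ζ = 0 by ring,
    Real.exp_zero, mul_one] at h1

lemma stmt8_expswap_le (v c ζ : ℝ) (hc : v * Real.exp (-(3 / 2) * ζ) ≤ c) :
    v ≤ c * Real.exp ((3 / 2) * ζ) := by
  have h1 := mul_le_mul_of_nonneg_right hc (Real.exp_pos ((3 / 2) * ζ)).le
  rwa [mul_assoc, ← Real.exp_add, show -(3 / 2) * ζ + (3 / 2) * ζ = 0 by ring,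
    Real.exp_zero, mul_one] at h1

/-- Lemma 7.1 (Cases 1–3) in self-contained ODE form: forward characteristics
`y' = (3/2)y + e^{ζ/2}h(ζ)` with `a > 0` and `|h − a| ≤ a/2`. -/
theorem stmt_8 (a ζ₀ y₀ : ℝ) (ha : 0 < a)
    (h y : ℝ → ℝ)
    (hcont : ContinuousOn h (Set.Ici ζ₀))
    (hh : ∀ ζ ∈ Set.Ici ζ₀, |h ζ - a| ≤ a / 2)
    (hy : ∀ ζ ∈ Set.Ici ζ₀,
      HasDerivWithinAt y ((3 / 2) * y ζ + Real.exp (ζ / 2) * h ζ) (Set.Ici ζ₀) ζ)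
    (hy0 : y ζ₀ = y₀) :
    -- Case 1
    (y₀ < -4 * a * Real.exp (ζ₀ / 2) →
      ∀ ζ ∈ Set.Ici ζ₀, y ζ ≤ -a * Real.exp ((3 / 2) * ζ - ζ₀) ∧ y ζ < 0) ∧
    -- Case 2
    (-(a / 4) * Real.exp (ζ₀ / 2) ≤ y₀ → y₀ ≤ 0 →
      ∃ ζs, ζ₀ ≤ ζs ∧ y ζs = 0 ∧
        (∀ ζ, ζ₀ ≤ ζ → ζ ≤ ζs →
          -(3 / 2) * a * (Real.exp (-ζ) - Real.exp (-ζs)) * Real.exp ((3 / 2) * ζ) ≤ y ζ ∧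
          y ζ ≤ -(a / 2) * (Real.exp (-ζ) - Real.exp (-ζs)) * Real.exp ((3 / 2) * ζ) ∧
          y ζ ≤ 0) ∧
        (∀ ζ, ζs ≤ ζ →
          (a / 2) * (Real.exp (-ζs) - Real.exp (-ζ)) * Real.exp ((3 / 2) * ζ) ≤ y ζ ∧
          0 ≤ y ζ)) ∧
    -- Case 3
    (0 ≤ y₀ →
      ∀ ζ ∈ Set.Ici ζ₀,
        (a / 2) * (Real.exp (-ζ₀) - Real.exp (-ζ)) * Real.exp ((3 / 2) * ζ) ≤ y ζ ∧
        0 ≤ y ζ) := by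
  have hycont : ContinuousOn y (Set.Ici ζ₀) := fun ζ hζ => (hy ζ hζ).continuousWithinAt
  -- antiderivative of exp(-·)
  have hexpderiv : ∀ x : ℝ, HasDerivAt (fun α => -Real.exp (-α)) (Real.exp (-x)) x := by
    intro x
    have := ((hasDerivAt_neg x).exp).neg
    simp only [mul_neg, mul_one, neg_neg] at this
    exact this
  have hexp_int : ∀ s t : ℝ, (∫ α in s..t, Real.exp (-α)) = Real.exp (-s) - Real.exp (-t) := by
    intro s t
    rw [intervalIntegral.integral_eq_sub_of_hasDerivAt (fun x _ => hexpderiv x)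
      ((Real.continuous_exp.comp continuous_neg).intervalIntegrable s t)]
    ring
  -- the key integral identity
  have key : ∀ s t, ζ₀ ≤ s → s ≤ t →
      (∫ α in s..t, Real.exp (-α) * h α)
        = y t * Real.exp (-(3 / 2) * t) - y s * Real.exp (-(3 / 2) * s) := by
    intro s t hs hst
    have hsub : Set.Icc s t ⊆ Set.Ici ζ₀ := fun x hx => le_trans hs hx.1
    have hecont : Continuous (fun ζ : ℝ => Real.exp (-(3 / 2) * ζ)) :=
      Real.continuous_exp.comp (continuous_const.mul continuous_id)
    apply intervalIntegral.integral_eq_sub_of_hasDeriv_right_of_le hst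
    · exact ((hycont.mono hsub).mul hecont.continuousOn)
    · intro x hx
      have hxI : Set.Ici ζ₀ ∈ nhds x := Ici_mem_nhds (lt_of_le_of_lt hs hx.1)
      have hd : HasDerivAt y ((3 / 2) * y x + Real.exp (x / 2) * h x) x :=
        (hy x (le_of_lt (lt_of_le_of_lt hs hx.1))).hasDerivAt hxI
      have he : HasDerivAt (fun ζ : ℝ => Real.exp (-(3 / 2) * ζ))
          (Real.exp (-(3 / 2) * x) * (-(3 / 2) * 1)) x :=
        ((hasDerivAt_id x).const_mul (-(3 / 2) : ℝ)).exp
      have hprod := hd.mul he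
      have hkey : Real.exp (x / 2) * Real.exp (-(3 / 2) * x) = Real.exp (-x) := by
        rw [← Real.exp_add]; congr 1; ring
      have : ((3 / 2) * y x + Real.exp (x / 2) * h x) * Real.exp (-(3 / 2) * x)
          + y x * (Real.exp (-(3 / 2) * x) * (-(3 / 2) * 1)) = Real.exp (-x) * h x := by
        linear_combination h x * hkey
      rw [this] at hprod
      exact hprod.hasDerivWithinAt.mono (Set.Ioi_subset_Ici le_rfl)
    · have hcIcc : ContinuousOn (fun α => Real.exp (-α) * h α) (Set.uIcc s t) := by
        rw [Set.uIcc_of_le hst]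
        exact (Real.continuous_exp.comp continuous_neg).continuousOn.mul (hcont.mono hsub)
      exact hcIcc.intervalIntegrable
  -- bounds on h
  have hlo : ∀ x ∈ Set.Ici ζ₀, a / 2 ≤ h x := by
    intro x hx
    have := abs_le.mp (hh x hx)
    linarith [this.1]
  have hhi : ∀ x ∈ Set.Ici ζ₀, h x ≤ 3 * a / 2 := by
    intro x hx
    have := abs_le.mp (hh x hx)
    linarith [this.2]
  -- integral bounds
  have hint : ∀ s t, ζ₀ ≤ s → s ≤ t →
      IntervalIntegrable (fun α => Real.exp (-α) * h α) MeasureTheory.volume s t := by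
    intro s t hs hst
    have hsub : Set.Icc s t ⊆ Set.Ici ζ₀ := fun x hx => le_trans hs hx.1
    have hcIcc : ContinuousOn (fun α => Real.exp (-α) * h α) (Set.uIcc s t) := by
      rw [Set.uIcc_of_le hst]
      exact (Real.continuous_exp.comp continuous_neg).continuousOn.mul (hcont.mono hsub)
    exact hcIcc.intervalIntegrable
  have hmono_lo : ∀ s t, ζ₀ ≤ s → s ≤ t →
      a / 2 * (Real.exp (-s) - Real.exp (-t)) ≤ ∫ α in s..t, Real.exp (-α) * h α := by
    intro s t hs hst
    have hsub : Set.Icc s t ⊆ Set.Ici ζ₀ := fun x hx => le_trans hs hx.1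
    have hint2 : IntervalIntegrable (fun α => Real.exp (-α) * (a / 2))
        MeasureTheory.volume s t :=
      ((Real.continuous_exp.comp continuous_neg).mul continuous_const).intervalIntegrable s t
    have hm := intervalIntegral.integral_mono_on hst hint2 (hint s t hs hst)
      (fun x hx => mul_le_mul_of_nonneg_left (hlo x (hsub hx)) (Real.exp_pos _).le)
    calc a / 2 * (Real.exp (-s) - Real.exp (-t))
        = ∫ α in s..t, Real.exp (-α) * (a / 2) := by
          rw [intervalIntegral.integral_mul_const, hexp_int]; ring
      _ ≤ _ := hm
  have hmono_hi : ∀ s t, ζ₀ ≤ s → s ≤ t →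
      (∫ α in s..t, Real.exp (-α) * h α) ≤ 3 * a / 2 * (Real.exp (-s) - Real.exp (-t)) := by
    intro s t hs hst
    have hsub : Set.Icc s t ⊆ Set.Ici ζ₀ := fun x hx => le_trans hs hx.1
    have hint2 : IntervalIntegrable (fun α => Real.exp (-α) * (3 * a / 2))
        MeasureTheory.volume s t :=
      ((Real.continuous_exp.comp continuous_neg).mul continuous_const).intervalIntegrable s t
    have hm := intervalIntegral.integral_mono_on hst (hint s t hs hst) hint2
      (fun x hx => mul_le_mul_of_nonneg_left (hhi x (hsub hx)) (Real.exp_pos _).le)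
    calc (∫ α in s..t, Real.exp (-α) * h α)
        ≤ ∫ α in s..t, Real.exp (-α) * (3 * a / 2) := hm
      _ = 3 * a / 2 * (Real.exp (-s) - Real.exp (-t)) := by
          rw [intervalIntegral.integral_mul_const, hexp_int]; ring
  -- combined bounds on G(t) = y t * exp(-(3/2)t)
  have glo : ∀ s t, ζ₀ ≤ s → s ≤ t →
      y s * Real.exp (-(3 / 2) * s) + a / 2 * (Real.exp (-s) - Real.exp (-t))
        ≤ y t * Real.exp (-(3 / 2) * t) := by
    intro s t hs hst
    have h1 := hmono_lo s t hs hst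
    rw [key s t hs hst] at h1
    linarith
  have ghi : ∀ s t, ζ₀ ≤ s → s ≤ t →
      y t * Real.exp (-(3 / 2) * t)
        ≤ y s * Real.exp (-(3 / 2) * s) + 3 * a / 2 * (Real.exp (-s) - Real.exp (-t)) := by
    intro s t hs hst
    have h1 := hmono_hi s t hs hst
    rw [key s t hs hst] at h1
    linarith
  have hex0 : Real.exp (ζ₀ / 2) * Real.exp (-(3 / 2) * ζ₀) = Real.exp (-ζ₀) := by
    rw [← Real.exp_add]; congr 1; ring
  refine ⟨?_, ?_, ?_⟩
  · -- Case 1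
    intro h1 ζ hζ
    have hg0 : y ζ₀ * Real.exp (-(3 / 2) * ζ₀) < -4 * a * Real.exp (-ζ₀) := by
      rw [hy0]
      calc y₀ * Real.exp (-(3 / 2) * ζ₀)
          < -4 * a * Real.exp (ζ₀ / 2) * Real.exp (-(3 / 2) * ζ₀) :=
            mul_lt_mul_of_pos_right h1 (Real.exp_pos _)
        _ = -4 * a * Real.exp (-ζ₀) := by rw [mul_assoc, hex0]
    have hgζ := ghi ζ₀ ζ le_rfl hζ
    have hbd : y ζ * Real.exp (-(3 / 2) * ζ) ≤ -a * Real.exp (-ζ₀) := by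
      have he1 : (0:ℝ) < Real.exp (-ζ) := Real.exp_pos _
      linarith [mul_pos ha he1, mul_pos ha (Real.exp_pos (-ζ₀))]
    have hle := stmt8_expswap_le (y ζ) (-a * Real.exp (-ζ₀)) ζ hbd
    have heq : -a * Real.exp (-ζ₀) * Real.exp ((3 / 2) * ζ) = -a * Real.exp ((3 / 2) * ζ - ζ₀) := by
      rw [mul_assoc, ← Real.exp_add]; congr 2; ring
    constructor
    · rw [← heq]; exact hle
    · have : -a * Real.exp ((3 / 2) * ζ - ζ₀) < 0 := by
        have := Real.exp_pos ((3 / 2) * ζ - ζ₀); nlinarith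
      linarith [heq ▸ hle]
  · -- Case 2
    intro h2a h2b
    set Z := ζ₀ + Real.log 2 with hZdef
    have hZ : ζ₀ ≤ Z := le_add_of_nonneg_right (Real.log_nonneg one_le_two)
    have hexpZ : Real.exp (-Z) = Real.exp (-ζ₀) / 2 := by
      rw [show -Z = -ζ₀ - Real.log 2 by rw [hZdef]; ring, Real.exp_sub,
        Real.exp_log two_pos]
    have hg0 : -(a / 4) * Real.exp (-ζ₀) ≤ y ζ₀ * Real.exp (-(3 / 2) * ζ₀) := by
      rw [hy0]
      calc -(a / 4) * Real.exp (-ζ₀)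
          = -(a / 4) * Real.exp (ζ₀ / 2) * Real.exp (-(3 / 2) * ζ₀) := by
            rw [mul_assoc, hex0]
        _ ≤ y₀ * Real.exp (-(3 / 2) * ζ₀) :=
            mul_le_mul_of_nonneg_right h2a (Real.exp_pos _).le
    have hyZ : 0 ≤ y Z := by
      have h1 := glo ζ₀ Z le_rfl hZ
      have h2 : 0 ≤ y Z * Real.exp (-(3 / 2) * Z) := by
        rw [hexpZ] at h1
        nlinarith
      simpa using stmt8_expswap_ge (y Z) 0 Z h2
    have hy00 : y ζ₀ ≤ 0 := by rw [hy0]; exact h2b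
    have hivt : (0:ℝ) ∈ y '' Set.Icc ζ₀ Z := by
      apply intermediate_value_Icc hZ (hycont.mono (fun x hx => le_trans le_rfl hx.1))
      exact ⟨hy00, hyZ⟩
    obtain ⟨ζs, hζsmem, hζs0⟩ := hivt
    refine ⟨ζs, hζsmem.1, hζs0, ?_, ?_⟩
    · intro ζ hζ hζζs
      have hGs : y ζs * Real.exp (-(3 / 2) * ζs) = 0 := by rw [hζs0]; ring
      have h1 := glo ζ ζs hζ hζζs
      have h2 := ghi ζ ζs hζ hζζs
      rw [hGs] at h1 h2
      have hb1 : -(3 / 2) * a * (Real.exp (-ζ) - Real.exp (-ζs))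
          ≤ y ζ * Real.exp (-(3 / 2) * ζ) := by linarith
      have hb2 : y ζ * Real.exp (-(3 / 2) * ζ)
          ≤ -(a / 2) * (Real.exp (-ζ) - Real.exp (-ζs)) := by linarith
      have hmono : Real.exp (-ζs) ≤ Real.exp (-ζ) := Real.exp_le_exp.mpr (by linarith)
      refine ⟨stmt8_expswap_ge _ _ _ hb1, stmt8_expswap_le _ _ _ hb2, ?_⟩
      have hrhs : -(a / 2) * (Real.exp (-ζ) - Real.exp (-ζs)) * Real.exp ((3 / 2) * ζ) ≤ 0 := by
        have hn := mul_nonneg (mul_nonneg (by linarith : (0:ℝ) ≤ a / 2)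
          (by linarith : (0:ℝ) ≤ Real.exp (-ζ) - Real.exp (-ζs)))
          (Real.exp_pos ((3 / 2) * ζ)).le
        linarith
      linarith [stmt8_expswap_le _ _ _ hb2]
    · intro ζ hζ
      have hGs : y ζs * Real.exp (-(3 / 2) * ζs) = 0 := by rw [hζs0]; ring
      have h1 := glo ζs ζ hζsmem.1 hζ
      rw [hGs] at h1
      have hb1 : a / 2 * (Real.exp (-ζs) - Real.exp (-ζ))
          ≤ y ζ * Real.exp (-(3 / 2) * ζ) := by linarith
      have hmono : Real.exp (-ζ) ≤ Real.exp (-ζs) := Real.exp_le_exp.mpr (by linarith)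
      have hle := stmt8_expswap_ge _ _ _ hb1
      refine ⟨hle, ?_⟩
      have : 0 ≤ a / 2 * (Real.exp (-ζs) - Real.exp (-ζ)) * Real.exp ((3 / 2) * ζ) :=
        mul_nonneg (mul_nonneg (by linarith) (by linarith)) (Real.exp_pos _).le
      linarith
  · -- Case 3
    intro h3 ζ hζ
    have hg0 : 0 ≤ y ζ₀ * Real.exp (-(3 / 2) * ζ₀) := by
      rw [hy0]; exact mul_nonneg h3 (Real.exp_pos _).le
    have h1 := glo ζ₀ ζ le_rfl hζ
    have hb1 : a / 2 * (Real.exp (-ζ₀) - Real.exp (-ζ))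
        ≤ y ζ * Real.exp (-(3 / 2) * ζ) := by linarith
    have hmono : Real.exp (-ζ) ≤ Real.exp (-ζ₀) :=
      Real.exp_le_exp.mpr (by linarith [Set.mem_Ici.mp hζ])
    have hle := stmt8_expswap_ge _ _ _ hb1
    refine ⟨hle, ?_⟩
    have : 0 ≤ a / 2 * (Real.exp (-ζ₀) - Real.exp (-ζ)) * Real.exp ((3 / 2) * ζ) :=
      mul_nonneg (mul_nonneg (by linarith) (by linarith)) (Real.exp_pos _).le
    linarith
end

section
/- Let a < 0, ζ₀ ∈ ℝ, and let h : [ζ₀,∞) → ℝ be continuous with |h(ζ) − a| ≤ |a|/2 for all ζ ≥ ζ₀. Let y : [ζ₀,∞) → ℝ solve y'(ζ) = (3/2)y(ζ) + e^{ζ/2}h(ζ) with y(ζ₀) = y₀. Then: (Case 1) if y₀ > −4a e^{ζ₀/2}, then y(ζ) ≥ −a e^{(3/2)ζ − ζ₀} > 0 for all ζ ≥ ζ₀; (Case 2) if 0 ≤ y₀ ≤ −(a/4)e^{ζ₀/2}, then there exists ζ* ≥ ζ₀ with y(ζ*) = 0 such that 0 ≤ −(a/2)(e^{−ζ} − e^{−ζ*})e^{(3/2)ζ}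 ≤ y(ζ) ≤ −(3/2)a(e^{−ζ} − e^{−ζ*})e^{(3/2)ζ} for ζ₀ ≤ ζ ≤ ζ*, and y(ζ) ≤ (a/2)(e^{−ζ*} − e^{−ζ})e^{(3/2)ζ} ≤ 0 for ζ ≥ ζ*; (Case 3) if y₀ ≤ 0, then y(ζ) ≤ (a/2)(e^{−ζ₀} − e^{−ζ})e^{(3/2)ζ} ≤ 0 for all ζ ≥ ζ₀. -/
private lemma aux_mono_9 {s : ℝ} {f f' : ℝ → ℝ}
    (hf : ∀ x ∈ Set.Ici s, HasDerivWithinAt f (f' x) (Set.Ici s) x)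
    (h0 : ∀ x ∈ Set.Ici s, 0 ≤ f' x) :
    MonotoneOn f (Set.Ici s) := by
  apply monotoneOn_of_deriv_nonneg (convex_Ici s)
    (fun x hx => (hf x hx).continuousWithinAt)
  · intro x hx
    rw [interior_Ici] at hx
    exact ((hf x (Set.mem_Ici.mpr (le_of_lt hx))).hasDerivAt
      (Ici_mem_nhds hx)).differentiableAt.differentiableWithinAt
  · intro x hx
    rw [interior_Ici] at hx
    rw [((hf x (Set.mem_Ici.mpr (le_of_lt hx))).hasDerivAt (Ici_mem_nhds hx)).deriv]
    exact h0 x (Set.mem_Ici.mpr (le_of_lt hx))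

/-- Lemma 7.2 (Cases 1–3) in self-contained ODE form: forward characteristics
`y' = (3/2)y + e^{ζ/2}h(ζ)` with `a < 0` and `|h − a| ≤ |a|/2`. -/
theorem stmt_9 (a ζ₀ y₀ : ℝ) (ha : a < 0)
    (h y : ℝ → ℝ)
    (hcont : ContinuousOn h (Set.Ici ζ₀))
    (hh : ∀ ζ ∈ Set.Ici ζ₀, |h ζ - a| ≤ |a| / 2)
    (hy : ∀ ζ ∈ Set.Ici ζ₀,
      HasDerivWithinAt y ((3 / 2) * y ζ + Real.exp (ζ / 2) * h ζ) (Set.Ici ζ₀) ζ)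
    (hy0 : y ζ₀ = y₀) :
    -- Case 1
    (-4 * a * Real.exp (ζ₀ / 2) < y₀ →
      ∀ ζ ∈ Set.Ici ζ₀, -a * Real.exp ((3 / 2) * ζ - ζ₀) ≤ y ζ ∧ 0 < y ζ) ∧
    -- Case 2
    (0 ≤ y₀ → y₀ ≤ -(a / 4) * Real.exp (ζ₀ / 2) →
      ∃ ζs, ζ₀ ≤ ζs ∧ y ζs = 0 ∧
        (∀ ζ, ζ₀ ≤ ζ → ζ ≤ ζs →
          0 ≤ y ζ ∧
          -(a / 2) * (Real.exp (-ζ) - Real.exp (-ζs)) * Real.exp ((3 / 2) * ζ) ≤ y ζ ∧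
          y ζ ≤ -(3 / 2) * a * (Real.exp (-ζ) - Real.exp (-ζs)) * Real.exp ((3 / 2) * ζ)) ∧
        (∀ ζ, ζs ≤ ζ →
          y ζ ≤ (a / 2) * (Real.exp (-ζs) - Real.exp (-ζ)) * Real.exp ((3 / 2) * ζ) ∧
          y ζ ≤ 0)) ∧
    -- Case 3
    (y₀ ≤ 0 →
      ∀ ζ ∈ Set.Ici ζ₀,
        y ζ ≤ (a / 2) * (Real.exp (-ζ₀) - Real.exp (-ζ)) * Real.exp ((3 / 2) * ζ) ∧
        y ζ ≤ 0) := by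
  -- bounds on h
  have ha2 : ∀ ζ ∈ Set.Ici ζ₀, 3 * a / 2 ≤ h ζ ∧ h ζ ≤ a / 2 := by
    intro ζ hζ
    have H := hh ζ hζ
    rw [abs_of_neg ha, abs_le] at H
    exact ⟨by linarith [H.1], by linarith [H.2]⟩
  have hmem0 : ζ₀ ∈ Set.Ici ζ₀ := Set.self_mem_Ici
  -- the rescaled function g
  set g : ℝ → ℝ := fun ζ => y ζ * Real.exp (-(3 / 2) * ζ) with hgdef
  have hyg : ∀ ζ, y ζ = g ζ * Real.exp ((3 / 2) * ζ) := by
    intro ζ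
    have e0 : (-(3 / 2 : ℝ)) * ζ + (3 / 2) * ζ = 0 := by ring
    simp only [hgdef]
    rw [mul_assoc, ← Real.exp_add, e0, Real.exp_zero, mul_one]
  have hg' : ∀ ζ ∈ Set.Ici ζ₀,
      HasDerivWithinAt g (Real.exp (-ζ) * h ζ) (Set.Ici ζ₀) ζ := by
    intro ζ hζ
    have hf : HasDerivAt (fun x : ℝ => (-(3 / 2 : ℝ)) * x) (-(3 / 2 : ℝ)) ζ := by
      simpa using (hasDerivAt_id ζ).const_mul (-(3 / 2 : ℝ))
    have hE : HasDerivAt (fun x : ℝ => Real.exp (-(3 / 2) * x))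
        (Real.exp (-(3 / 2) * ζ) * (-(3 / 2))) ζ := hf.exp
    have hprod := (hy ζ hζ).mul hE.hasDerivWithinAt
    have e1 : Real.exp (ζ / 2) * Real.exp (-(3 / 2) * ζ) = Real.exp (-ζ) := by
      rw [← Real.exp_add]; ring_nf
    refine hprod.congr_deriv ?_
    linear_combination (h ζ) * e1
  -- exp(-x) has derivative exp(-x)*(-1)
  have hEneg : ∀ x : ℝ, HasDerivAt (fun x : ℝ => Real.exp (-x)) (Real.exp (-x) * (-1)) x := by
    intro x
    exact (hasDerivAt_id x).neg.exp
  -- upper difference bound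
  have key_up : ∀ ζ₁ ∈ Set.Ici ζ₀, ∀ ζ₂ ∈ Set.Ici ζ₀, ζ₁ ≤ ζ₂ →
      g ζ₂ - g ζ₁ ≤ (a / 2) * (Real.exp (-ζ₁) - Real.exp (-ζ₂)) := by
    have hmono : MonotoneOn (fun x => -(g x + (a / 2) * Real.exp (-x))) (Set.Ici ζ₀) := by
      apply aux_mono_9
        (f' := fun x => -(Real.exp (-x) * h x + (a / 2) * (Real.exp (-x) * (-1))))
      · intro x hx
        exact ((hg' x hx).add (((hEneg x).const_mul (a / 2)).hasDerivWithinAt)).neg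
      · intro x hx
        have h2 := (ha2 x hx).2
        have hp := Real.exp_pos (-x)
        nlinarith
    intro ζ₁ h1 ζ₂ h2 hle
    have := hmono h1 h2 hle
    simp only [neg_le_neg_iff] at this
    linarith [this]
  -- lower difference bound
  have key_low : ∀ ζ₁ ∈ Set.Ici ζ₀, ∀ ζ₂ ∈ Set.Ici ζ₀, ζ₁ ≤ ζ₂ →
      (3 * a / 2) * (Real.exp (-ζ₁) - Real.exp (-ζ₂)) ≤ g ζ₂ - g ζ₁ := by
    have hmono : MonotoneOn (fun x => g x + (3 * a / 2) * Real.exp (-x)) (Set.Ici ζ₀) := by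
      apply aux_mono_9
        (f' := fun x => Real.exp (-x) * h x + (3 * a / 2) * (Real.exp (-x) * (-1)))
      · intro x hx
        exact (hg' x hx).add (((hEneg x).const_mul (3 * a / 2)).hasDerivWithinAt)
      · intro x hx
        have h2 := (ha2 x hx).1
        have hp := Real.exp_pos (-x)
        nlinarith
    intro ζ₁ h1 ζ₂ h2 hle
    have := hmono h1 h2 hle
    simp only at this
    linarith [this]
  have hE0 : Real.exp (ζ₀ / 2) * Real.exp (-(3 / 2) * ζ₀) = Real.exp (-ζ₀) := by
    rw [← Real.exp_add]; ring_nf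
  have hgζ₀ : g ζ₀ = y₀ * Real.exp (-(3 / 2) * ζ₀) := by
    simp only [hgdef, hy0]
  refine ⟨?_, ?_, ?_⟩
  · -- Case 1
    intro h1 ζ hζ
    have hgz0 : -4 * a * Real.exp (-ζ₀) < g ζ₀ := by
      rw [hgζ₀, ← hE0]
      have hp := Real.exp_pos (-(3 / 2) * ζ₀)
      nlinarith
    have hlow := key_low ζ₀ hmem0 ζ hζ hζ
    have hpz : (0 : ℝ) < Real.exp (-ζ) := Real.exp_pos _
    have hpz0 : (0 : ℝ) < Real.exp (-ζ₀) := Real.exp_pos _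
    have hgb : -a * Real.exp (-ζ₀) ≤ g ζ := by nlinarith
    have hE2 : Real.exp ((3 / 2) * ζ - ζ₀) = Real.exp (-ζ₀) * Real.exp ((3 / 2) * ζ) := by
      rw [← Real.exp_add]; ring_nf
    have hpe : (0 : ℝ) < Real.exp ((3 / 2) * ζ) := Real.exp_pos _
    have hgpos : 0 < g ζ := lt_of_lt_of_le (by nlinarith) hgb
    constructor
    · rw [hyg ζ, hE2]
      have := mul_le_mul_of_nonneg_right hgb hpe.le
      linarith [this]
    · rw [hyg ζ]
      exact mul_pos hgpos hpe
  · -- Case 2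
    intro hy0' hy0''
    set ζ₁ : ℝ := ζ₀ + Real.log 2 with hζ₁def
    have hlog2 : (0 : ℝ) < Real.log 2 := Real.log_pos (by norm_num)
    have hζ₁ : ζ₀ ≤ ζ₁ := le_add_of_nonneg_right hlog2.le
    have hE1 : Real.exp (-ζ₁) = Real.exp (-ζ₀) / 2 := by
      rw [hζ₁def, neg_add, Real.exp_add, Real.exp_neg (Real.log 2), Real.exp_log two_pos]
      ring
    have hpz0 : (0 : ℝ) < Real.exp (-ζ₀) := Real.exp_pos _
    have hg0ge : 0 ≤ g ζ₀ := by
      rw [hgζ₀]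
      exact mul_nonneg hy0' (Real.exp_pos _).le
    have hg0le : g ζ₀ ≤ -(a / 4) * Real.exp (-ζ₀) := by
      rw [hgζ₀, ← hE0]
      have hp := Real.exp_pos (-(3 / 2) * ζ₀)
      nlinarith
    have hg1le : g ζ₁ ≤ 0 := by
      have := key_up ζ₀ hmem0 ζ₁ (Set.mem_Ici.mpr hζ₁) hζ₁
      rw [hE1] at this
      linarith
    have hcg : ContinuousOn g (Set.Icc ζ₀ ζ₁) :=
      ContinuousOn.mono (fun x hx => (hg' x hx).continuousWithinAt) Set.Icc_subset_Ici_self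
    have hmem : (0 : ℝ) ∈ Set.Icc (g ζ₁) (g ζ₀) := ⟨hg1le, hg0ge⟩
    obtain ⟨ζs, hζs, hgz⟩ := intermediate_value_Icc' hζ₁ hcg hmem
    have hζsIci : ζs ∈ Set.Ici ζ₀ := hζs.1
    refine ⟨ζs, hζs.1, by rw [hyg ζs, hgz, zero_mul], ?_, ?_⟩
    · intro ζ hζl hζr
      have hζIci : ζ ∈ Set.Ici ζ₀ := hζl
      have hup := key_up ζ hζIci ζs hζsIci hζr
      have hlow := key_low ζ hζIci ζs hζsIci hζr
      rw [hgz] at hup hlow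
      have hee : Real.exp (-ζs) ≤ Real.exp (-ζ) := Real.exp_le_exp.2 (by linarith)
      have hpe : (0 : ℝ) < Real.exp ((3 / 2) * ζ) := Real.exp_pos _
      have hb1 : -(a / 2) * (Real.exp (-ζ) - Real.exp (-ζs)) ≤ g ζ := by linarith
      have hb2 : g ζ ≤ -(3 / 2) * a * (Real.exp (-ζ) - Real.exp (-ζs)) := by linarith
      have hg0 : 0 ≤ g ζ := by nlinarith
      refine ⟨?_, ?_, ?_⟩
      · rw [hyg ζ]; exact mul_nonneg hg0 hpe.le
      · rw [hyg ζ]; exact mul_le_mul_of_nonneg_right hb1 hpe.le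
      · rw [hyg ζ]; exact mul_le_mul_of_nonneg_right hb2 hpe.le
    · intro ζ hζr
      have hζIci : ζ ∈ Set.Ici ζ₀ := le_trans hζs.1 hζr
      have hup := key_up ζs hζsIci ζ hζIci hζr
      rw [hgz] at hup
      have hee : Real.exp (-ζ) ≤ Real.exp (-ζs) := Real.exp_le_exp.2 (by linarith)
      have hpe : (0 : ℝ) < Real.exp ((3 / 2) * ζ) := Real.exp_pos _
      have hgle : g ζ ≤ (a / 2) * (Real.exp (-ζs) - Real.exp (-ζ)) := by linarith
      have hg0 : g ζ ≤ 0 := by nlinarith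
      constructor
      · rw [hyg ζ]; exact mul_le_mul_of_nonneg_right hgle hpe.le
      · rw [hyg ζ]
        have h2 := mul_le_mul_of_nonneg_right hg0 hpe.le
        rw [zero_mul] at h2
        exact h2
  · -- Case 3
    intro hy0' ζ hζ
    have hup := key_up ζ₀ hmem0 ζ hζ hζ
    have hg0le : g ζ₀ ≤ 0 := by
      rw [hgζ₀]
      have hp := (Real.exp_pos (-(3 / 2) * ζ₀))
      nlinarith
    have hee : Real.exp (-ζ) ≤ Real.exp (-ζ₀) :=
      Real.exp_le_exp.2 (by have := Set.mem_Ici.mp hζ; linarith)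
    have hpe : (0 : ℝ) < Real.exp ((3 / 2) * ζ) := Real.exp_pos _
    have hgle : g ζ ≤ (a / 2) * (Real.exp (-ζ₀) - Real.exp (-ζ)) := by linarith
    have hg0 : g ζ ≤ 0 := by nlinarith
    constructor
    · rw [hyg ζ]; exact mul_le_mul_of_nonneg_right hgle hpe.le
    · rw [hyg ζ]
      have h2 := mul_le_mul_of_nonneg_right hg0 hpe.le
      rw [zero_mul] at h2
      exact h2
end

section
/- Let a ≠ 0, 0 < κ < 1, c₀ > 0, ζ₀ ∈ ℝ and ζ* ≥ ζ₀. Suppose y : [ζ₀,∞) → ℝ is a (measurable) function satisfying |y(ζ)| ≥ (|a|/2)|e^{−ζ} − e^{−ζ*}| e^{(3/2)ζ} for all ζ ≥ ζ₀, and suppose 𝒟 : ℝ × [ζ₀,∞) → ℝ satisfies |𝒟(z,ζ)| ≤ c₀ (1+z²)^{−κ/2} for all z ∈ ℝ and ζ ≥ ζ₀. Then ∫_{ζ₀}^{∞} |𝒟(y(ζ),ζ)| dζ ≤ (16 c₀ / (κ(1−κ)|a|^{κ})) e^{−κζ₀/2}. -/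
open MeasureTheory


lemma exp_sub_one_lb (s : ℝ) : min |s| 1 / 2 ≤ |Real.exp s - 1| := by
  rcases le_or_gt 0 s with hs | hs
  · have h1 : s + 1 ≤ Real.exp s := Real.add_one_le_exp s
    rw [abs_of_nonneg hs, abs_of_nonneg (by linarith)]
    have h2 : min s 1 ≤ s := min_le_left _ _
    linarith
  · have habs : |s| = -s := abs_of_neg hs
    have h1 : Real.exp s < 1 := Real.exp_lt_one_iff.mpr hs
    rw [habs, abs_of_nonpos (by linarith)]
    rcases le_or_gt 1 (-s) with h2 | h2
    · rw [min_eq_right h2]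
      have h3 : Real.exp s ≤ Real.exp (-1) := Real.exp_le_exp.mpr (by linarith)
      have h4 : Real.exp (-1) ≤ 1/2 := by
        rw [Real.exp_neg]
        have h : (2:ℝ) ≤ Real.exp 1 := by linarith [Real.add_one_le_exp 1]
        rw [inv_le_comm₀ (Real.exp_pos 1) (by norm_num)]
        norm_num at h ⊢
        linarith
      linarith
    · rw [min_eq_left h2.le]
      have h3 : 1 + (-s) ≤ Real.exp (-s) := by linarith [Real.add_one_le_exp (-s)]
      have h4 : Real.exp s = (Real.exp (-s))⁻¹ := by
        rw [← Real.exp_neg, neg_neg]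
      have h5 : Real.exp s ≤ (1 + (-s))⁻¹ := by
        rw [h4]
        exact inv_anti₀ (by linarith) h3
      have h6 : (1 + (-s))⁻¹ ≤ 1 - (-s)/2 := by
        rw [inv_le_iff_one_le_mul₀ (by linarith)]
        nlinarith
      linarith

lemma ptbound (a κ c₀ ζ₀ ζs ζ : ℝ) (ha : 0 < |a|) (hκ0 : 0 < κ) (hκ1 : κ < 1)
    (hc₀ : 0 < c₀) (hζ : ζ₀ ≤ ζ) (hne : ζ ≠ ζs) (Y Dv : ℝ)
    (hy : |a| / 2 * |Real.exp (-ζ) - Real.exp (-ζs)| * Real.exp ((3 / 2) * ζ) ≤ |Y|)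
    (hD : |Dv| ≤ c₀ * (1 + Y ^ 2) ^ (-(κ / 2))) :
    |Dv| ≤ c₀ * (|a| / 4) ^ (-κ) * (Real.exp (-(κ / 2) * ζ)
      + Real.exp (-(κ * ζ₀) / 2) *
        ((Set.Ioo (ζs - 1) ζs).indicator (fun t => (ζs - t) ^ (-κ)) ζ
          + (Set.Ioo ζs (ζs + 1)).indicator (fun t => (t - ζs) ^ (-κ)) ζ)) := by
  set m : ℝ := min |ζ - ζs| 1 with hm_def
  have hmpos : 0 < m := lt_min (abs_pos.mpr (sub_ne_zero.mpr hne)) one_pos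
  -- rewrite the lower bound
  have key : |a| / 4 * (Real.exp (ζ / 2) * m) ≤ |Y| := by
    have e1 : |Real.exp (-ζ) - Real.exp (-ζs)| * Real.exp ((3 / 2) * ζ)
        = Real.exp (ζ / 2) * |Real.exp (ζ - ζs) - 1| := by
      have : Real.exp (-ζ) - Real.exp (-ζs) = Real.exp (-ζ) * (1 - Real.exp (ζ - ζs)) := by
        rw [mul_sub, ← Real.exp_add]; ring_nf
      rw [this, abs_mul, Real.abs_exp, abs_sub_comm]
      rw [mul_right_comm, ← Real.exp_add]
      ring_nf
    have e2 : m / 2 ≤ |Real.exp (ζ - ζs) - 1| := by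
      simpa using exp_sub_one_lb (ζ - ζs)
    have e3 : |a| / 2 * (Real.exp (ζ / 2) * |Real.exp (ζ - ζs) - 1|) ≤ |Y| := by
      calc |a| / 2 * (Real.exp (ζ / 2) * |Real.exp (ζ - ζs) - 1|)
          = |a| / 2 * (|Real.exp (-ζ) - Real.exp (-ζs)| * Real.exp ((3 / 2) * ζ)) := by
            rw [e1]
        _ ≤ |Y| := by rw [← mul_assoc]; exact hy
    have hE : 0 < Real.exp (ζ / 2) := Real.exp_pos _
    have e4 : |a| / 2 * Real.exp (ζ / 2) * (m / 2)
        ≤ |a| / 2 * Real.exp (ζ / 2) * |Real.exp (ζ - ζs) - 1| :=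
      mul_le_mul_of_nonneg_left e2 (by positivity)
    have e5 : |a| / 4 * (Real.exp (ζ / 2) * m) = |a| / 2 * Real.exp (ζ / 2) * (m / 2) := by ring
    have e6 : |a| / 2 * (Real.exp (ζ / 2) * |Real.exp (ζ - ζs) - 1|)
        = |a| / 2 * Real.exp (ζ / 2) * |Real.exp (ζ - ζs) - 1| := by ring
    rw [e6] at e3
    linarith
  have hY0 : 0 < |Y| :=
    lt_of_lt_of_le (mul_pos (by positivity) (mul_pos (Real.exp_pos _) hmpos)) key
  -- chain of rpow bounds
  have c1 : (1 + Y ^ 2) ^ (-(κ / 2)) ≤ (Y ^ 2) ^ (-(κ / 2)) := by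
    have hy2 : (0:ℝ) < Y ^ 2 := by rw [← sq_abs]; exact pow_pos hY0 2
    exact Real.rpow_le_rpow_of_nonpos hy2 (by nlinarith) (by linarith)
  have c2 : (Y ^ 2 : ℝ) ^ (-(κ / 2)) = |Y| ^ (-κ) := by
    rw [← sq_abs, ← Real.rpow_natCast |Y| 2, ← Real.rpow_mul (abs_nonneg _)]
    norm_num
    ring_nf
  have c3 : |Y| ^ (-κ) ≤ (|a| / 4 * (Real.exp (ζ / 2) * m)) ^ (-κ) :=
    Real.rpow_le_rpow_of_nonpos
      (mul_pos (by positivity) (mul_pos (Real.exp_pos _) hmpos)) key (by linarith)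
  have c4 : (|a| / 4 * (Real.exp (ζ / 2) * m)) ^ (-κ)
      = (|a| / 4) ^ (-κ) * (Real.exp (-(κ / 2) * ζ) * m ^ (-κ)) := by
    rw [Real.mul_rpow (by positivity) (by positivity),
      Real.mul_rpow (by positivity) (by positivity), ← Real.exp_mul]
    ring_nf
  have hbase : |Dv| ≤ c₀ * ((|a| / 4) ^ (-κ) * (Real.exp (-(κ / 2) * ζ) * m ^ (-κ))) := by
    calc |Dv| ≤ c₀ * (1 + Y ^ 2) ^ (-(κ / 2)) := hD
      _ ≤ c₀ * (|a| / 4 * (Real.exp (ζ / 2) * m)) ^ (-κ) := by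
          have := c1.trans (le_of_eq c2) |>.trans c3
          exact mul_le_mul_of_nonneg_left this hc₀.le
      _ = _ := by rw [c4]
  have hCpos : (0:ℝ) < (|a| / 4) ^ (-κ) := by positivity
  have hexple : Real.exp (-(κ / 2) * ζ) ≤ Real.exp (-(κ * ζ₀) / 2) :=
    Real.exp_le_exp.mpr (by nlinarith)
  rcases lt_or_ge |ζ - ζs| 1 with hlt | hge
  · -- singular region
    have hm_eq : m = |ζ - ζs| := min_eq_left hlt.le
    have hind : (Set.Ioo (ζs - 1) ζs).indicator (fun t => (ζs - t) ^ (-κ)) ζ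
        + (Set.Ioo ζs (ζs + 1)).indicator (fun t => (t - ζs) ^ (-κ)) ζ = m ^ (-κ) := by
      rcases lt_or_gt_of_ne hne with h | h
      · have habs : |ζ - ζs| = ζs - ζ := by rw [abs_of_neg (by linarith)]; ring
        have hmem : ζ ∈ Set.Ioo (ζs - 1) ζs := ⟨by rw [habs] at hlt; linarith, h⟩
        have hnmem : ζ ∉ Set.Ioo ζs (ζs + 1) := fun hc => absurd hc.1 (not_lt.mpr h.le)
        rw [Set.indicator_of_mem hmem, Set.indicator_of_notMem hnmem, hm_eq, habs, add_zero]
      · have habs : |ζ - ζs| = ζ - ζs := abs_of_pos (by linarith)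
        have hmem : ζ ∈ Set.Ioo ζs (ζs + 1) := ⟨h, by rw [habs] at hlt; linarith⟩
        have hnmem : ζ ∉ Set.Ioo (ζs - 1) ζs := fun hc => absurd hc.2 (not_lt.mpr h.le)
        rw [Set.indicator_of_mem hmem, Set.indicator_of_notMem hnmem, hm_eq, habs, zero_add]
    rw [hind]
    have h1 : Real.exp (-(κ / 2) * ζ) * m ^ (-κ) ≤ Real.exp (-(κ * ζ₀) / 2) * m ^ (-κ) :=
      mul_le_mul_of_nonneg_right hexple (by positivity)
    have h2 : (0:ℝ) < Real.exp (-(κ / 2) * ζ) := Real.exp_pos _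
    calc |Dv| ≤ c₀ * ((|a| / 4) ^ (-κ) * (Real.exp (-(κ / 2) * ζ) * m ^ (-κ))) := hbase
      _ ≤ c₀ * ((|a| / 4) ^ (-κ) * (Real.exp (-(κ / 2) * ζ)
            + Real.exp (-(κ * ζ₀) / 2) * m ^ (-κ))) := by
          apply mul_le_mul_of_nonneg_left _ hc₀.le
          apply mul_le_mul_of_nonneg_left _ hCpos.le
          linarith
      _ = _ := by ring
  · -- regular region
    have hm_eq : m = 1 := min_eq_right hge
    have hone : m ^ (-κ) = 1 := by rw [hm_eq, Real.one_rpow]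
    have hindnn : 0 ≤ (Set.Ioo (ζs - 1) ζs).indicator (fun t => (ζs - t) ^ (-κ)) ζ
        + (Set.Ioo ζs (ζs + 1)).indicator (fun t => (t - ζs) ^ (-κ)) ζ := by
      apply add_nonneg
      · exact Set.indicator_nonneg
          (fun t ht => Real.rpow_nonneg (by linarith [ht.2] : (0:ℝ) ≤ ζs - t) _) _
      · exact Set.indicator_nonneg
          (fun t ht => Real.rpow_nonneg (by linarith [ht.1] : (0:ℝ) ≤ t - ζs) _) _
    have hEnn : (0:ℝ) ≤ Real.exp (-(κ * ζ₀) / 2) := (Real.exp_pos _).le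
    calc |Dv| ≤ c₀ * ((|a| / 4) ^ (-κ) * (Real.exp (-(κ / 2) * ζ) * m ^ (-κ))) := hbase
      _ = c₀ * ((|a| / 4) ^ (-κ) * Real.exp (-(κ / 2) * ζ)) := by rw [hone, mul_one]
      _ ≤ _ := by
          rw [mul_assoc]
          apply mul_le_mul_of_nonneg_left _ hc₀.le
          apply mul_le_mul_of_nonneg_left _ hCpos.le
          nlinarith [mul_nonneg hEnn hindnn]

/-- Lemma 7.3: if `|y(ζ)| ≥ (|a|/2)|e^{−ζ} − e^{−ζ*}|e^{(3/2)ζ}` and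
`|𝒟(z,ζ)| ≤ c₀(1+z²)^{−κ/2}` with `0 < κ < 1`, then
`∫_{ζ₀}^{∞} |𝒟(y(ζ),ζ)| dζ ≤ (16c₀/(κ(1−κ)|a|^κ)) e^{−κζ₀/2}`. -/
theorem stmt_10 (a κ c₀ ζ₀ ζs : ℝ) (ha : a ≠ 0) (hκ0 : 0 < κ) (hκ1 : κ < 1)
    (hc₀ : 0 < c₀) (hζs : ζ₀ ≤ ζs)
    (y : ℝ → ℝ) (hymeas : Measurable y)
    (hy : ∀ ζ ∈ Set.Ici ζ₀,
      |a| / 2 * |Real.exp (-ζ) - Real.exp (-ζs)| * Real.exp ((3 / 2) * ζ) ≤ |y ζ|)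
    (D : ℝ → ℝ → ℝ)
    (hD : ∀ z : ℝ, ∀ ζ ∈ Set.Ici ζ₀, |D z ζ| ≤ c₀ * (1 + z ^ 2) ^ (-(κ / 2))) :
    ∫ ζ in Set.Ioi ζ₀, |D (y ζ) ζ| ≤
      16 * c₀ / (κ * (1 - κ) * |a| ^ κ) * Real.exp (-(κ * ζ₀) / 2) := by
  have ha' : 0 < |a| := abs_pos.mpr ha
  have hκ1' : 0 < 1 - κ := by linarith
  have hP : (0:ℝ) < |a| ^ κ := Real.rpow_pos_of_pos ha' κ
  have hRHS : 0 < 16 * c₀ / (κ * (1 - κ) * |a| ^ κ) * Real.exp (-(κ * ζ₀) / 2) := by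
    positivity
  by_cases hInt : IntegrableOn (fun ζ => |D (y ζ) ζ|) (Set.Ioi ζ₀) volume
  swap
  · rw [integral_undef hInt]; exact hRHS.le
  have hκ2 : 0 < κ / 2 := by linarith
  set E : ℝ := Real.exp (-(κ * ζ₀) / 2) with hE_def
  have hEpos : 0 < E := Real.exp_pos _
  set C : ℝ := (|a| / 4) ^ (-κ) with hC_def
  have hCpos : 0 < C := by positivity
  set f1 : ℝ → ℝ := fun ζ => Real.exp (-(κ / 2) * ζ) with hf1_def
  set g1 : ℝ → ℝ := (Set.Ioo (ζs - 1) ζs).indicator (fun t => (ζs - t) ^ (-κ)) with hg1_def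
  set g2 : ℝ → ℝ := (Set.Ioo ζs (ζs + 1)).indicator (fun t => (t - ζs) ^ (-κ)) with hg2_def
  set h : ℝ → ℝ := fun ζ => c₀ * C * (f1 ζ + E * (g1 ζ + g2 ζ)) with hh_def
  -- integrability
  have hIexp : IntegrableOn f1 (Set.Ioi ζ₀) := by
    rw [hf1_def]
    exact exp_neg_integrableOn_Ioi ζ₀ hκ2
  have hbasic : IntervalIntegrable (fun x : ℝ => x ^ (-κ)) volume 0 1 :=
    intervalIntegral.intervalIntegrable_rpow' (by linarith)
  have hI1 : IntegrableOn (fun t => (ζs - t) ^ (-κ)) (Set.Ioo (ζs - 1) ζs) := by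
    have h2 := (hbasic.comp_sub_left ζs).symm
    rw [intervalIntegrable_iff_integrableOn_Ioo_of_le (by linarith)] at h2
    simpa using h2
  have hI2 : IntegrableOn (fun t : ℝ => (t - ζs) ^ (-κ)) (Set.Ioo ζs (ζs + 1)) := by
    have h2 := hbasic.comp_sub_right ζs
    rw [intervalIntegrable_iff_integrableOn_Ioo_of_le (by linarith)] at h2
    simpa [add_comm] using h2
  have hG1 : Integrable g1 volume := (integrable_indicator_iff measurableSet_Ioo).mpr hI1
  have hG2 : Integrable g2 volume := (integrable_indicator_iff measurableSet_Ioo).mpr hI2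
  have hadd : Integrable (fun ζ : ℝ => E * (g1 ζ + g2 ζ)) (volume.restrict (Set.Ioi ζ₀)) :=
    Integrable.const_mul (hG1.integrableOn.add hG2.integrableOn) E
  have hIh : IntegrableOn h (Set.Ioi ζ₀) := by
    apply Integrable.const_mul
    exact hIexp.add hadd
  -- a.e. pointwise bound
  have hae : ∀ᵐ ζ ∂(volume.restrict (Set.Ioi ζ₀)), |D (y ζ) ζ| ≤ h ζ := by
    have h1 : ∀ᵐ ζ ∂(volume.restrict (Set.Ioi ζ₀)), ζ ≠ ζs := by
      apply ae_restrict_of_ae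
      rw [ae_iff]
      have : {x : ℝ | ¬ x ≠ ζs} = {ζs} := by ext x; simp
      rw [this]
      exact measure_singleton ζs
    have h2 : ∀ᵐ ζ ∂(volume.restrict (Set.Ioi ζ₀)), ζ ∈ Set.Ioi ζ₀ :=
      ae_restrict_mem measurableSet_Ioi
    filter_upwards [h1, h2] with ζ hne hmem
    exact ptbound a κ c₀ ζ₀ ζs ζ ha' hκ0 hκ1 hc₀ (le_of_lt hmem) hne (y ζ) (D (y ζ) ζ)
      (hy ζ (Set.mem_Ici.mpr (le_of_lt hmem))) (hD (y ζ) ζ (Set.mem_Ici.mpr (le_of_lt hmem)))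
  have hmono : ∫ ζ in Set.Ioi ζ₀, |D (y ζ) ζ| ≤ ∫ ζ in Set.Ioi ζ₀, h ζ :=
    integral_mono_ae hInt hIh hae
  -- compute the pieces
  have hJexp : ∫ ζ in Set.Ioi ζ₀, f1 ζ = (2 / κ) * E := by
    have h1 : (∫ ζ in Set.Ioi ζ₀, Real.exp (-(κ / 2 * ζ)))
        = (κ / 2)⁻¹ * Real.exp (-(κ / 2 * ζ₀)) := by
      rw [integral_comp_mul_left_Ioi (fun x => Real.exp (-x)) ζ₀ hκ2,
        integral_exp_neg_Ioi, smul_eq_mul]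
    calc ∫ ζ in Set.Ioi ζ₀, f1 ζ = ∫ ζ in Set.Ioi ζ₀, Real.exp (-(κ / 2 * ζ)) := by
          simp only [hf1_def, neg_mul]
      _ = (κ / 2)⁻¹ * Real.exp (-(κ / 2 * ζ₀)) := h1
      _ = (2 / κ) * E := by
          rw [hE_def, show -(κ / 2 * ζ₀) = -(κ * ζ₀) / 2 by ring, inv_div]
  have hJ1val : ∫ ζ in Set.Ioo (ζs - 1) ζs, (ζs - ζ) ^ (-κ) = 1 / (1 - κ) := by
    rw [← integral_Ioc_eq_integral_Ioo, ← intervalIntegral.integral_of_le (by linarith)]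
    rw [intervalIntegral.integral_comp_sub_left (fun x : ℝ => x ^ (-κ)) ζs]
    rw [show ζs - ζs = (0:ℝ) by ring, show ζs - (ζs - 1) = (1:ℝ) by ring]
    rw [integral_rpow (Or.inl (by linarith))]
    rw [Real.one_rpow, Real.zero_rpow (by intro hc; linarith [hc] : -κ + 1 ≠ 0)]
    ring_nf
  have hJ2val : ∫ ζ in Set.Ioo ζs (ζs + 1), (ζ - ζs) ^ (-κ) = 1 / (1 - κ) := by
    rw [← integral_Ioc_eq_integral_Ioo, ← intervalIntegral.integral_of_le (by linarith)]
    rw [intervalIntegral.integral_comp_sub_right (fun x : ℝ => x ^ (-κ)) ζs]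
    rw [show ζs - ζs = (0:ℝ) by ring, show ζs + 1 - ζs = (1:ℝ) by ring]
    rw [integral_rpow (Or.inl (by linarith))]
    rw [Real.one_rpow, Real.zero_rpow (by intro hc; linarith [hc] : -κ + 1 ≠ 0)]
    ring_nf
  have hJ1 : ∫ ζ in Set.Ioi ζ₀, g1 ζ ≤ 1 / (1 - κ) := by
    rw [hg1_def, integral_indicator measurableSet_Ioo,
      Measure.restrict_restrict measurableSet_Ioo]
    calc ∫ ζ in Set.Ioo (ζs - 1) ζs ∩ Set.Ioi ζ₀, (ζs - ζ) ^ (-κ)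
        ≤ ∫ ζ in Set.Ioo (ζs - 1) ζs, (ζs - ζ) ^ (-κ) := by
          apply setIntegral_mono_set hI1
          · exact (ae_restrict_mem measurableSet_Ioo).mono fun x hx =>
              Real.rpow_nonneg (by linarith [hx.2]) _
          · exact HasSubset.Subset.eventuallyLE Set.inter_subset_left
      _ = 1 / (1 - κ) := hJ1val
  have hJ2 : ∫ ζ in Set.Ioi ζ₀, g2 ζ ≤ 1 / (1 - κ) := by
    rw [hg2_def, integral_indicator measurableSet_Ioo,
      Measure.restrict_restrict measurableSet_Ioo]
    calc ∫ ζ in Set.Ioo ζs (ζs + 1) ∩ Set.Ioi ζ₀, (ζ - ζs) ^ (-κ)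
        ≤ ∫ ζ in Set.Ioo ζs (ζs + 1), (ζ - ζs) ^ (-κ) := by
          apply setIntegral_mono_set hI2
          · exact (ae_restrict_mem measurableSet_Ioo).mono fun x hx =>
              Real.rpow_nonneg (by linarith [hx.1]) _
          · exact HasSubset.Subset.eventuallyLE Set.inter_subset_left
      _ = 1 / (1 - κ) := hJ2val
  -- assemble
  have hsplit : ∫ ζ in Set.Ioi ζ₀, h ζ
      = c₀ * C * ((∫ ζ in Set.Ioi ζ₀, f1 ζ)
        + E * ((∫ ζ in Set.Ioi ζ₀, g1 ζ) + (∫ ζ in Set.Ioi ζ₀, g2 ζ))) := by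
    rw [hh_def]
    rw [integral_const_mul]
    rw [integral_add hIexp hadd]
    rw [integral_const_mul]
    rw [integral_add hG1.integrableOn hG2.integrableOn]
  have hhle : ∫ ζ in Set.Ioi ζ₀, h ζ ≤ c₀ * C * ((2 / κ) * E + E * (2 / (1 - κ))) := by
    rw [hsplit, hJexp]
    have : (∫ ζ in Set.Ioi ζ₀, g1 ζ) + (∫ ζ in Set.Ioi ζ₀, g2 ζ) ≤ 2 / (1 - κ) := by
      have := add_le_add hJ1 hJ2
      calc (∫ ζ in Set.Ioi ζ₀, g1 ζ) + (∫ ζ in Set.Ioi ζ₀, g2 ζ)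
          ≤ 1 / (1 - κ) + 1 / (1 - κ) := add_le_add hJ1 hJ2
        _ = 2 / (1 - κ) := by ring
    have h2 := mul_le_mul_of_nonneg_left this hEpos.le
    have h3 : (0:ℝ) ≤ c₀ * C := by positivity
    nlinarith
  -- final arithmetic
  have hCle : C ≤ 4 * (|a| ^ κ)⁻¹ := by
    rw [hC_def, Real.div_rpow (abs_nonneg a) (by norm_num), Real.rpow_neg (abs_nonneg a),
      Real.rpow_neg (by norm_num)]
    have h4 : (4:ℝ) ^ κ ≤ 4 := by
      calc (4:ℝ) ^ κ ≤ (4:ℝ) ^ (1:ℝ) :=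
            Real.rpow_le_rpow_of_exponent_le (by norm_num) hκ1.le
        _ = 4 := Real.rpow_one 4
    have h5 : (0:ℝ) < (4:ℝ) ^ κ := by positivity
    rw [div_eq_mul_inv, inv_inv]
    have := mul_le_mul_of_nonneg_left h4 (inv_nonneg.mpr hP.le)
    calc (|a| ^ κ)⁻¹ * ((4:ℝ) ^ κ) ≤ (|a| ^ κ)⁻¹ * 4 := this
      _ = 4 * (|a| ^ κ)⁻¹ := by ring
  have hfinal : c₀ * C * ((2 / κ) * E + E * (2 / (1 - κ)))
      ≤ 16 * c₀ / (κ * (1 - κ) * |a| ^ κ) * E := by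
    have e1 : (2 / κ) * E + E * (2 / (1 - κ)) = (2 / κ + 2 / (1 - κ)) * E := by ring
    have e2 : 2 / κ + 2 / (1 - κ) = 2 / (κ * (1 - κ)) := by
      field_simp
      ring
    rw [e1, e2]
    have h6 : c₀ * C * (2 / (κ * (1 - κ))) ≤ c₀ * (4 * (|a| ^ κ)⁻¹) * (2 / (κ * (1 - κ))) := by
      have : (0:ℝ) ≤ 2 / (κ * (1 - κ)) := by positivity
      have h7 := mul_le_mul_of_nonneg_left hCle hc₀.le
      exact mul_le_mul_of_nonneg_right h7 this
    have h8 : c₀ * (4 * (|a| ^ κ)⁻¹) * (2 / (κ * (1 - κ)))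
        ≤ 16 * c₀ / (κ * (1 - κ) * |a| ^ κ) := by
      rw [div_eq_mul_inv, div_eq_mul_inv]
      have : c₀ * (4 * (|a| ^ κ)⁻¹) * (2 * (κ * (1 - κ))⁻¹)
          = 8 * c₀ * (κ * (1 - κ) * |a| ^ κ)⁻¹ := by
        field_simp
        ring
      rw [this]
      have h9 : (0:ℝ) < (κ * (1 - κ) * |a| ^ κ)⁻¹ := by positivity
      have h10 : (8:ℝ) * c₀ ≤ 16 * c₀ := by linarith
      exact mul_le_mul_of_nonneg_right h10 h9.le
    calc c₀ * C * (2 / (κ * (1 - κ)) * E)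
        = c₀ * C * (2 / (κ * (1 - κ))) * E := by ring
      _ ≤ 16 * c₀ / (κ * (1 - κ) * |a| ^ κ) * E := by
          exact mul_le_mul_of_nonneg_right (h6.trans h8) hEpos.le
  calc ∫ ζ in Set.Ioi ζ₀, |D (y ζ) ζ| ≤ ∫ ζ in Set.Ioi ζ₀, h ζ := hmono
    _ ≤ c₀ * C * ((2 / κ) * E + E * (2 / (1 - κ))) := hhle
    _ ≤ 16 * c₀ / (κ * (1 - κ) * |a| ^ κ) * E := hfinal
end

section
/- Let a ≥ 1, ν ∈ ℝ and ζ₀ ≥ 0. Suppose y : [ζ₀,∞) → ℝ satisfies |y(ζ)| ≥ e^{(3/2)ζ − ζ₀} for all ζ ≥ ζ₀, and h : [ζ₀,∞) → ℝ satisfies |h(ζ)| ≤ 2a for all ζ ≥ ζ₀. Then ∫_{ζ₀}^{∞} | 3ν/(1+y(ζ)²) − (2ν y(ζ)/(1+y(ζ)²)) e^{ζ/2} h(ζ) | dζ ≤ 6|ν| a. -/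
open MeasureTheory Filter Set Real

private lemma exp_decay_hasDeriv (b c : ℝ) (hb : 0 < b) (x : ℝ) :
    HasDerivAt (fun x => -Real.exp (-(b * (x - c))) / b) (Real.exp (-(b * (x - c)))) x := by
  have h1 : HasDerivAt (fun x : ℝ => -(b * (x - c))) (-b) x := by
    have := (((hasDerivAt_id x).sub_const c).const_mul b).neg
    rw [show (fun x : ℝ => -(b * (x - c))) = -(fun x => b * (x - c)) from rfl]
    simpa using this
  have h2 := (Real.hasDerivAt_exp (-(b * (x - c)))).comp x h1
  have h3 := h2.neg.div_const b
  refine HasDerivAt.congr_deriv h3 ?_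
  field_simp

private lemma exp_decay_tendsto' (b c : ℝ) (hb : 0 < b) :
    Tendsto (fun x => -Real.exp (-(b * (x - c))) / b) atTop (nhds 0) := by
  have h1 : Tendsto (fun x : ℝ => -(b * (x - c))) atTop atBot := by
    apply tendsto_neg_atTop_atBot.comp
    apply Tendsto.const_mul_atTop hb
    exact tendsto_atTop_add_const_right _ (-c) tendsto_id
  have h2 : Tendsto (fun x => Real.exp (-(b * (x - c)))) atTop (nhds 0) :=
    Real.tendsto_exp_atBot.comp h1
  have := (h2.neg).div_const b
  simpa using this

private lemma exp_decay_integrableOn (b c : ℝ) (hb : 0 < b) :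
    IntegrableOn (fun x => Real.exp (-(b * (x - c)))) (Set.Ioi c) :=
  integrableOn_Ioi_deriv_of_nonneg
    (exp_decay_hasDeriv b c hb c).continuousAt.continuousWithinAt
    (fun x _ => exp_decay_hasDeriv b c hb x)
    (fun x _ => (Real.exp_pos _).le)
    (exp_decay_tendsto' b c hb)

private lemma exp_decay_integral (b c : ℝ) (hb : 0 < b) :
    (∫ x in Set.Ioi c, Real.exp (-(b * (x - c)))) = 1 / b := by
  rw [integral_Ioi_of_hasDerivAt_of_nonneg
    (exp_decay_hasDeriv b c hb c).continuousAt.continuousWithinAt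
    (fun x _ => exp_decay_hasDeriv b c hb x)
    (fun x _ => (Real.exp_pos _).le)
    (exp_decay_tendsto' b c hb)]
  simp [Real.exp_zero]
  ring

/-- Estimate (vii-25): if `|y(ζ)| ≥ e^{(3/2)ζ−ζ₀}` and `|h| ≤ 2a` with `a ≥ 1`, `ζ₀ ≥ 0`,
then `∫_{ζ₀}^{∞} |3ν/(1+y²) − (2νy/(1+y²))e^{ζ/2}h(ζ)| dζ ≤ 6|ν|a`. -/
theorem stmt_15 (a ν ζ₀ : ℝ) (ha : 1 ≤ a) (hζ₀ : 0 ≤ ζ₀)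
    (y h : ℝ → ℝ)
    (hy : ∀ ζ ∈ Set.Ici ζ₀, Real.exp ((3 / 2) * ζ - ζ₀) ≤ |y ζ|)
    (hh : ∀ ζ ∈ Set.Ici ζ₀, |h ζ| ≤ 2 * a) :
    (∫ ζ in Set.Ioi ζ₀,
        |3 * ν / (1 + y ζ ^ 2) -
          2 * ν * y ζ / (1 + y ζ ^ 2) * Real.exp (ζ / 2) * h ζ|) ≤ 6 * |ν| * a := by
  set f : ℝ → ℝ := fun ζ =>
    |3 * ν / (1 + y ζ ^ 2) - 2 * ν * y ζ / (1 + y ζ ^ 2) * Real.exp (ζ / 2) * h ζ| with hf_def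
  set g : ℝ → ℝ := fun ζ =>
    3 * |ν| * Real.exp (-(3 * (ζ - ζ₀))) + 4 * |ν| * a * Real.exp (-(1 * (ζ - ζ₀))) with hg_def
  have hg_int : IntegrableOn g (Set.Ioi ζ₀) :=
    ((exp_decay_integrableOn 3 ζ₀ (by norm_num)).const_mul (3 * |ν|)).add
      ((exp_decay_integrableOn 1 ζ₀ one_pos).const_mul (4 * |ν| * a))
  have hpt : ∀ ζ ∈ Set.Ioi ζ₀, f ζ ≤ g ζ := by
    intro ζ hζ
    have hζ' : ζ₀ ≤ ζ := le_of_lt hζ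
    have hE : Real.exp ((3 / 2) * ζ - ζ₀) ≤ |y ζ| := hy ζ hζ'
    have hE1 : (1 : ℝ) ≤ Real.exp ((3 / 2) * ζ - ζ₀) := Real.one_le_exp (by linarith)
    have hEpos : (0 : ℝ) < Real.exp ((3 / 2) * ζ - ζ₀) := Real.exp_pos _
    have hY2 : Real.exp ((3 / 2) * ζ - ζ₀) ^ 2 ≤ y ζ ^ 2 := by
      rw [← sq_abs (y ζ)]
      exact pow_le_pow_left₀ hEpos.le hE 2
    have hden : (0 : ℝ) < 1 + y ζ ^ 2 := by positivity
    -- first term bound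
    have hA : Real.exp (-((3 / 2) * ζ - ζ₀)) ^ 2 ≤ Real.exp (-(3 * (ζ - ζ₀))) := by
      rw [← Real.exp_nat_mul, Real.exp_le_exp]
      push_cast; linarith
    have hAinv : Real.exp (-((3 / 2) * ζ - ζ₀)) = (Real.exp ((3 / 2) * ζ - ζ₀))⁻¹ := by
      rw [Real.exp_neg]
    have h1 : |3 * ν / (1 + y ζ ^ 2)| ≤ 3 * |ν| * Real.exp (-(3 * (ζ - ζ₀))) := by
      rw [abs_div, abs_of_pos hden]
      rw [div_le_iff₀ hden]
      have key : (1 : ℝ) ≤ Real.exp (-(3 * (ζ - ζ₀))) * (1 + y ζ ^ 2) := by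
        have h2' : Real.exp (-((3 / 2) * ζ - ζ₀)) ^ 2 * Real.exp ((3 / 2) * ζ - ζ₀) ^ 2 = 1 := by
          rw [hAinv, ← mul_pow, inv_mul_cancel₀ (ne_of_gt hEpos), one_pow]
        nlinarith [Real.exp_pos (-((3 / 2) * ζ - ζ₀)), Real.exp_pos (-(3 * (ζ - ζ₀))),
          sq_nonneg (Real.exp (-((3 / 2) * ζ - ζ₀)))]
      have habs : |3 * ν| = 3 * |ν| := by rw [abs_mul]; norm_num
      rw [habs]
      nlinarith [abs_nonneg ν]
    -- second term bound
    have h2 : |2 * ν * y ζ / (1 + y ζ ^ 2) * Real.exp (ζ / 2) * h ζ| ≤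
        4 * |ν| * a * Real.exp (-(1 * (ζ - ζ₀))) := by
      have hyabs : |y ζ| / (1 + y ζ ^ 2) ≤ (Real.exp ((3 / 2) * ζ - ζ₀))⁻¹ := by
        rw [div_le_iff₀ hden, ← hAinv]
        have : |y ζ| * Real.exp ((3 / 2) * ζ - ζ₀) ≤ 1 + y ζ ^ 2 := by
          nlinarith [abs_nonneg (y ζ), sq_abs (y ζ)]
        calc |y ζ| = |y ζ| * Real.exp ((3 / 2) * ζ - ζ₀) * Real.exp (-((3 / 2) * ζ - ζ₀)) := by
              rw [mul_assoc, ← Real.exp_add]; simp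
          _ ≤ (1 + y ζ ^ 2) * Real.exp (-((3 / 2) * ζ - ζ₀)) := by
              exact mul_le_mul_of_nonneg_right this (Real.exp_pos _).le
          _ = Real.exp (-((3 / 2) * ζ - ζ₀)) * (1 + y ζ ^ 2) := by ring
      have hexp : Real.exp (ζ / 2) * (Real.exp ((3 / 2) * ζ - ζ₀))⁻¹ =
          Real.exp (-(1 * (ζ - ζ₀))) := by
        rw [← Real.exp_neg, ← Real.exp_add]
        congr 1; ring
      have hhb := hh ζ hζ'
      have hhnn : (0 : ℝ) ≤ |h ζ| := abs_nonneg _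
      calc |2 * ν * y ζ / (1 + y ζ ^ 2) * Real.exp (ζ / 2) * h ζ|
          = 2 * |ν| * (|y ζ| / (1 + y ζ ^ 2)) * Real.exp (ζ / 2) * |h ζ| := by
            rw [abs_mul, abs_mul, abs_div, abs_mul, abs_mul, abs_of_pos hden,
              abs_of_pos (Real.exp_pos _), abs_two]
            ring
        _ ≤ 2 * |ν| * (Real.exp ((3 / 2) * ζ - ζ₀))⁻¹ * Real.exp (ζ / 2) * (2 * a) := by
            gcongr
        _ = 4 * |ν| * a * (Real.exp (ζ / 2) * (Real.exp ((3 / 2) * ζ - ζ₀))⁻¹) := by ring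
        _ = 4 * |ν| * a * Real.exp (-(1 * (ζ - ζ₀))) := by rw [hexp]
    calc f ζ ≤ |3 * ν / (1 + y ζ ^ 2)| +
        |2 * ν * y ζ / (1 + y ζ ^ 2) * Real.exp (ζ / 2) * h ζ| := abs_sub _ _
      _ ≤ g ζ := add_le_add h1 h2
  by_cases hf : IntegrableOn f (Set.Ioi ζ₀)
  · have hle : (∫ ζ in Set.Ioi ζ₀, f ζ) ≤ ∫ ζ in Set.Ioi ζ₀, g ζ :=
      setIntegral_mono_on hf hg_int measurableSet_Ioi hpt
    have hgval : (∫ ζ in Set.Ioi ζ₀, g ζ) = |ν| + 4 * |ν| * a := by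
      rw [hg_def]
      rw [integral_add ((exp_decay_integrableOn 3 ζ₀ (by norm_num)).const_mul (3 * |ν|))
        ((exp_decay_integrableOn 1 ζ₀ one_pos).const_mul (4 * |ν| * a))]
      rw [integral_const_mul, integral_const_mul, exp_decay_integral 3 ζ₀ (by norm_num),
        exp_decay_integral 1 ζ₀ one_pos]
      ring
    rw [hgval] at hle
    have : |ν| + 4 * |ν| * a ≤ 6 * |ν| * a := by nlinarith [abs_nonneg ν]
    linarith
  · rw [integral_undef hf]
    positivity
end
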